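/- Let V and W be oriented two-dimensional subspaces of ℝ⁴ with positively oriented orthonormal bases (v₁,v₂) and (w₁,w₂). Define cos θ = ⟨v₁∧v₂, w₁∧w₂⟩ in Λ²ℝ⁴. Then |cos θ| = cos θ₁ · cos θ₂, where θ₁, θ₂ are the principal angles between V and W. -/

import Mathlib

noncomputable section
open Real
open scoped RealInnerProductSpace

abbrev E4 := EuclideanSpace ℝ (Fin 4)

/-- `θ₁ ≤ θ₂` are the principal angles between the planes `V` and `W` of `ℝ⁴`:
`cos²θ₁`, `cos²θ₂` are the eigenvalues of the quadratic form `v ↦ ‖p_W v‖²` on `V`. -/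
def IsPrincipalAngles (V W : Submodule ℝ E4) (θ₁ θ₂ : ℝ) : Prop :=
  0 ≤ θ₁ ∧ θ₁ ≤ θ₂ ∧ θ₂ ≤ π / 2 ∧
  ∃ v₁ v₂ : E4, v₁ ∈ V ∧ v₂ ∈ V ∧ ‖v₁‖ = 1 ∧ ‖v₂‖ = 1 ∧ ⟪v₁, v₂⟫ = 0 ∧
    ∀ v ∈ V, ‖(W.orthogonalProjectionOnto v : E4)‖ ^ 2 =
      Real.cos θ₁ ^ 2 * ⟪v, v₁⟫ ^ 2 + Real.cos θ₂ ^ 2 * ⟪v, v₂⟫ ^ 2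


theorem proj_norm_sq' (W : Submodule ℝ E4) (w₁ w₂ : E4)
    (hw₁ : ‖w₁‖ = 1) (hw₂ : ‖w₂‖ = 1) (hw : ⟪w₁, w₂⟫ = 0)
    (hWspan : W = Submodule.span ℝ {w₁, w₂}) (v : E4) :
    ‖(W.orthogonalProjectionOnto v : E4)‖ ^ 2 = ⟪v, w₁⟫ ^ 2 + ⟪v, w₂⟫ ^ 2 := by
  have h1 : ⟪w₁, w₁⟫ = 1 := by rw [real_inner_self_eq_norm_sq, hw₁]; norm_num
  have h2 : ⟪w₂, w₂⟫ = 1 := by rw [real_inner_self_eq_norm_sq, hw₂]; norm_num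
  have hw' : ⟪w₂, w₁⟫ = 0 := by rw [real_inner_comm]; exact hw
  have hmem : ⟪v, w₁⟫ • w₁ + ⟪v, w₂⟫ • w₂ ∈ W := by
    rw [hWspan]
    exact Submodule.add_mem _ (Submodule.smul_mem _ _ (Submodule.subset_span (by simp)))
      (Submodule.smul_mem _ _ (Submodule.subset_span (by simp)))
  have hproj : (W.orthogonalProjectionOnto v : E4) = ⟪v, w₁⟫ • w₁ + ⟪v, w₂⟫ • w₂ := by
    rw [← Submodule.starProjection_apply]
    apply Submodule.eq_starProjection_of_mem_of_inner_eq_zero hmem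
    intro x hx
    rw [hWspan] at hx
    induction hx using Submodule.span_induction with
    | mem y hy =>
      rcases hy with rfl | rfl
      · rw [inner_sub_left, inner_add_left, real_inner_smul_left, real_inner_smul_left,
          h1, hw']
        ring
      · rw [inner_sub_left, inner_add_left, real_inner_smul_left, real_inner_smul_left,
          h2, hw]
        ring
    | zero => exact inner_zero_right _
    | add y z _ _ hy hz => rw [inner_add_right, hy, hz]; ring
    | smul c y _ hy => rw [real_inner_smul_right, hy]; ring
  rw [hproj, norm_add_sq_real, norm_smul, norm_smul, real_inner_smul_left,
    real_inner_smul_right, hw, hw₁, hw₂]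
  simp [mul_pow, sq_abs]

/-- If `(v₁, v₂)` and `(w₁, w₂)` are orthonormal bases of the planes `V` and `W`, and
`cos θ = ⟪v₁ ∧ v₂, w₁ ∧ w₂⟫ = ⟪v₁,w₁⟫⟪v₂,w₂⟫ − ⟪v₂,w₁⟫⟪v₁,w₂⟫`, then
`|cos θ| = cos θ₁ · cos θ₂` where `θ₁, θ₂` are the principal angles between `V` and `W`. -/
theorem abs_cos_angle_eq_prod_cos_principal_angles
    (V W : Submodule ℝ E4) (hV : Module.finrank ℝ V = 2) (hW : Module.finrank ℝ W = 2)
    (θ₁ θ₂ : ℝ) (h : IsPrincipalAngles V W θ₁ θ₂)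
    (v₁ v₂ w₁ w₂ : E4)
    (hv₁ : ‖v₁‖ = 1) (hv₂ : ‖v₂‖ = 1) (hv : ⟪v₁, v₂⟫ = 0)
    (hVspan : V = Submodule.span ℝ {v₁, v₂})
    (hw₁ : ‖w₁‖ = 1) (hw₂ : ‖w₂‖ = 1) (hw : ⟪w₁, w₂⟫ = 0)
    (hWspan : W = Submodule.span ℝ {w₁, w₂}) :
    |⟪v₁, w₁⟫ * ⟪v₂, w₂⟫ - ⟪v₂, w₁⟫ * ⟪v₁, w₂⟫| = Real.cos θ₁ * Real.cos θ₂ := by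
  obtain ⟨hθ₁, hθ₁₂, hθ₂, u₁, u₂, hu₁V, hu₂V, hu₁n, hu₂n, huu, hq⟩ := h
  have hpi := Real.pi_pos
  have hc1 : 0 ≤ Real.cos θ₁ := Real.cos_nonneg_of_mem_Icc ⟨by linarith, by linarith⟩
  have hc2 : 0 ≤ Real.cos θ₂ := Real.cos_nonneg_of_mem_Icc ⟨by linarith, by linarith⟩
  have i1 : ⟪v₁, v₁⟫ = 1 := by rw [real_inner_self_eq_norm_sq, hv₁]; norm_num
  have i2 : ⟪v₂, v₂⟫ = 1 := by rw [real_inner_self_eq_norm_sq, hv₂]; norm_num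
  have hv' : ⟪v₂, v₁⟫ = 0 := by rw [real_inner_comm]; exact hv
  have hv₁V : v₁ ∈ V := by rw [hVspan]; exact Submodule.subset_span (by simp)
  have hv₂V : v₂ ∈ V := by rw [hVspan]; exact Submodule.subset_span (by simp)
  obtain ⟨s, t, hst⟩ := Submodule.mem_span_pair.mp (hVspan ▸ hu₁V)
  obtain ⟨p, q, hpq⟩ := Submodule.mem_span_pair.mp (hVspan ▸ hu₂V)
  -- orthonormality relations for (s,t),(p,q)
  have hn1 : s ^ 2 + t ^ 2 = 1 := by
    have h1 : ⟪u₁, u₁⟫ = 1 := by rw [real_inner_self_eq_norm_sq, hu₁n]; norm_num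
    rw [← hst] at h1
    simp only [inner_add_left, inner_add_right, real_inner_smul_left, real_inner_smul_right,
      i1, i2, hv, hv', mul_one, mul_zero, add_zero, zero_add] at h1
    linear_combination h1
  have hn2 : p ^ 2 + q ^ 2 = 1 := by
    have h1 : ⟪u₂, u₂⟫ = 1 := by rw [real_inner_self_eq_norm_sq, hu₂n]; norm_num
    rw [← hpq] at h1
    simp only [inner_add_left, inner_add_right, real_inner_smul_left, real_inner_smul_right,
      i1, i2, hv, hv', mul_one, mul_zero, add_zero, zero_add] at h1
    linear_combination h1
  have hn3 : s * p + t * q = 0 := by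
    have h1 := huu
    rw [← hst, ← hpq] at h1
    simp only [inner_add_left, inner_add_right, real_inner_smul_left, real_inner_smul_right,
      i1, i2, hv, hv', mul_one, mul_zero, add_zero, zero_add] at h1
    linear_combination h1
  -- the three evaluations of the quadratic form
  have hE1 := hq v₁ hv₁V
  have hE2 := hq v₂ hv₂V
  have hE3 := hq (v₁ + v₂) (Submodule.add_mem _ hv₁V hv₂V)
  rw [proj_norm_sq' W w₁ w₂ hw₁ hw₂ hw hWspan, ← hst, ← hpq] at hE1 hE2 hE3
  simp only [inner_add_left, inner_add_right, real_inner_smul_left, real_inner_smul_right,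
    i1, i2, hv, hv', mul_one, mul_zero, add_zero, zero_add] at hE1 hE2 hE3
  set a := ⟪v₁, w₁⟫; set b := ⟪v₁, w₂⟫; set c := ⟪v₂, w₁⟫; set d := ⟪v₂, w₂⟫
  set c₁ := Real.cos θ₁; set c₂ := Real.cos θ₂
  have hcross : a * c + b * d = c₁ ^ 2 * (s * t) + c₂ ^ 2 * (p * q) := by
    linear_combination (hE3 - hE1 - hE2) / 2
  have key1 : (a * d - c * b) ^ 2 = c₁ ^ 2 * c₂ ^ 2 * (s * q - t * p) ^ 2 := by
    linear_combination (c ^ 2 + d ^ 2) * hE1 + (c₁ ^ 2 * s ^ 2 + c₂ ^ 2 * p ^ 2) * hE2 -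
      (a * c + b * d + c₁ ^ 2 * s * t + c₂ ^ 2 * p * q) * hcross
  have key2 : (s * q - t * p) ^ 2 = 1 := by
    linear_combination (p ^ 2 + q ^ 2) * hn1 + hn2 - (s * p + t * q) * hn3
  have hdet : (a * d - c * b) ^ 2 = (c₁ * c₂) ^ 2 := by
    linear_combination key1 + c₁ ^ 2 * c₂ ^ 2 * key2
  have h' : |a * d - c * b| = |c₁ * c₂| := by
    rw [← Real.sqrt_sq_eq_abs, ← Real.sqrt_sq_eq_abs, hdet]
  rw [h', abs_of_nonneg (mul_nonneg hc1 hc2)]
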